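/- The neo-Hookean Cauchy stress T(F,θ) = K(det F − 1)·I + 2G(F Fᵀ − tr(F Fᵀ)I/d)/(det F)^{1+2/d} satisfies the energy-control condition: there exists C > 0 such that |T(F,θ)| ≤ C(1 + E(F,θ)) for all F ∈ GL⁺(d) and θ ≥ 0, where E(F,θ) = (K/(2 det F))(det F − 1)² + G tr(F Fᵀ)/(det F)^{1+2/d} + (c_v θ/((1+α) det F))(θ/θ₀)^α. -/

import Mathlib

open Matrix

attribute [local instance] Matrix.frobeniusNormedAddCommGroup Matrix.frobeniusNormedSpace

lemma neoH_trace_eq_norm_sq {d : ℕ} (F : Matrix (Fin d) (Fin d) ℝ) :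
    (F * Fᵀ).trace = ‖F‖ ^ 2 := by
  have h := Matrix.frobenius_norm_def F
  have hs : (0:ℝ) ≤ ∑ i, ∑ j, ‖F i j‖ ^ (2:ℝ) := by positivity
  have h2 : ‖F‖ ^ 2 = ∑ i, ∑ j, ‖F i j‖ ^ (2:ℝ) := by
    rw [h, ← Real.rpow_natCast _ 2, ← Real.rpow_mul hs]
    norm_num
  rw [h2]
  simp [Matrix.trace, Matrix.mul_apply, Matrix.diag, Real.rpow_natCast,
    Real.norm_eq_abs, sq_abs, sq]

lemma neoH_norm_one {d : ℕ} :
    ‖(1 : Matrix (Fin d) (Fin d) ℝ)‖ = Real.sqrt d := by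
  have h := Matrix.frobenius_norm_def (1 : Matrix (Fin d) (Fin d) ℝ)
  rw [h, Real.sqrt_eq_rpow]
  congr 1
  simp [Matrix.one_apply, apply_ite]

lemma neoH_abs_det_bound (x : ℝ) (hx : 0 < x) : |x - 1| ≤ 1 + (x - 1) ^ 2 / x := by
  have hq : (x - 1) ^ 2 / x * x = (x - 1) ^ 2 := div_mul_cancel₀ _ hx.ne'
  have hq0 : 0 ≤ (x - 1) ^ 2 / x := by positivity
  rcases abs_cases (x - 1) with ⟨h, h'⟩ | ⟨h, h'⟩ <;> rw [h] <;>
    nlinarith [hq, hq0, hx, sq_nonneg (x - 1)]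

lemma neoH_scalar (K x : ℝ) (hK : 0 < K) (hx : 0 < x) :
    K * |x - 1| ≤ K + 2 * (K / (2 * x) * (x - 1) ^ 2) := by
  calc K * |x - 1| ≤ K * (1 + (x - 1) ^ 2 / x) :=
        mul_le_mul_of_nonneg_left (neoH_abs_det_bound x hx) hK.le
    _ = K + 2 * (K / (2 * x) * (x - 1) ^ 2) := by field_simp

lemma neoH_final (K sd a b e : ℝ) (hK : 0 < K) (hsd1 : 1 ≤ sd)
    (ha : a ≤ e) (hb : b ≤ e) (he : 0 ≤ e) (ha0 : 0 ≤ a) :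
    (K + 2 * a) * sd + 4 * b ≤ ((K + 2) * sd + 4) * (1 + e) := by
  nlinarith [mul_le_mul_of_nonneg_left ha (by linarith : (0:ℝ) ≤ 2 * sd),
    mul_nonneg (mul_nonneg hK.le (by linarith : (0:ℝ) ≤ sd)) he]

/-- Energy-controlled stress for the neo-Hookean model: there is `C > 0` with
`‖T(F,θ)‖ ≤ C(1 + E(F,θ))` for all `F ∈ GL⁺(d)` and `θ ≥ 0`, where `‖·‖` is
the Frobenius norm. -/
theorem neo_hookean_energy_controlled_stress {d : ℕ} (hd : d = 2 ∨ d = 3)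
    (K G c_v θ₀ α : ℝ)
    (hK : 0 < K) (hG : 0 < G) (hc : 0 < c_v) (hθ₀ : 0 < θ₀) (hα : 0 < α)
    (T : Matrix (Fin d) (Fin d) ℝ → ℝ → Matrix (Fin d) (Fin d) ℝ)
    (hT : T = fun F _θ => (K * (F.det - 1)) • (1 : Matrix (Fin d) (Fin d) ℝ)
      + (2 * G / F.det ^ (1 + (2:ℝ)/d)) •
          (F * Fᵀ - ((F * Fᵀ).trace / d) • (1 : Matrix (Fin d) (Fin d) ℝ)))
    (E : Matrix (Fin d) (Fin d) ℝ → ℝ → ℝ)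
    (hE : E = fun F θ => K / (2 * F.det) * (F.det - 1) ^ 2
      + G * (F * Fᵀ).trace / F.det ^ (1 + (2:ℝ)/d)
      + c_v * θ / ((1 + α) * F.det) * (θ / θ₀) ^ α) :
    ∃ C > (0:ℝ), ∀ (F : Matrix (Fin d) (Fin d) ℝ) (θ : ℝ),
      0 < F.det → 0 ≤ θ → ‖T F θ‖ ≤ C * (1 + E F θ) := by
  have hd2 : (2:ℝ) ≤ (d:ℝ) := by rcases hd with h | h <;> simp [h] <;> norm_num
  have hsd1 : (1:ℝ) ≤ Real.sqrt d := by
    rw [show (1:ℝ) = Real.sqrt 1 by simp]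
    exact Real.sqrt_le_sqrt (by linarith)
  set sd : ℝ := Real.sqrt d with hsd
  refine ⟨(K + 2) * sd + 4, by nlinarith, ?_⟩
  intro F θ hdet hθ
  set p : ℝ := 1 + (2:ℝ)/d with hp
  set D : ℝ := F.det ^ p with hD
  have hDpos : 0 < D := Real.rpow_pos_of_pos hdet p
  have htr : (F * Fᵀ).trace = ‖F‖ ^ 2 := neoH_trace_eq_norm_sq F
  have htr0 : 0 ≤ (F * Fᵀ).trace := by rw [htr]; positivity
  -- the three pieces of E are nonnegative
  have hE1 : 0 ≤ K / (2 * F.det) * (F.det - 1) ^ 2 := by positivity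
  have hE2 : 0 ≤ G * (F * Fᵀ).trace / D := by positivity
  have hE3 : 0 ≤ c_v * θ / ((1 + α) * F.det) * (θ / θ₀) ^ α := by
    have : (0:ℝ) ≤ (θ / θ₀) ^ α := Real.rpow_nonneg (by positivity) α
    have h1α : 0 < 1 + α := by linarith
    positivity
  have hEval : E F θ = K / (2 * F.det) * (F.det - 1) ^ 2
      + G * (F * Fᵀ).trace / D
      + c_v * θ / ((1 + α) * F.det) * (θ / θ₀) ^ α := by rw [hE]
  have hE0 : 0 ≤ E F θ := by rw [hEval]; linarith
  -- bound on the deviatoric part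
  have hFFt : ‖F * Fᵀ‖ ≤ (F * Fᵀ).trace := by
    calc ‖F * Fᵀ‖ ≤ ‖F‖ * ‖Fᵀ‖ := Matrix.frobenius_norm_mul F Fᵀ
    _ = ‖F‖ ^ 2 := by rw [Matrix.frobenius_norm_transpose]; ring
    _ = (F * Fᵀ).trace := htr.symm
  have hdev : ‖F * Fᵀ - ((F * Fᵀ).trace / d) • (1 : Matrix (Fin d) (Fin d) ℝ)‖
      ≤ 2 * (F * Fᵀ).trace := by
    have h1 : ‖((F * Fᵀ).trace / d) • (1 : Matrix (Fin d) (Fin d) ℝ)‖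
        = |(F * Fᵀ).trace / d| * sd := by
      rw [norm_smul, neoH_norm_one, Real.norm_eq_abs]
    have hdpos : (0:ℝ) < d := by linarith
    have hsdd : sd * sd = (d:ℝ) := Real.mul_self_sqrt (by linarith)
    have hsdled : sd ≤ (d:ℝ) := by nlinarith
    have h2 : |(F * Fᵀ).trace / d| * sd ≤ (F * Fᵀ).trace := by
      rw [abs_of_nonneg (by positivity)]
      rw [div_mul_eq_mul_div, div_le_iff₀ hdpos]
      exact mul_le_mul_of_nonneg_left hsdled htr0
    calc ‖F * Fᵀ - ((F * Fᵀ).trace / d) • (1 : Matrix (Fin d) (Fin d) ℝ)‖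
        ≤ ‖F * Fᵀ‖ + ‖((F * Fᵀ).trace / d) • (1 : Matrix (Fin d) (Fin d) ℝ)‖ :=
          norm_sub_le _ _
      _ ≤ (F * Fᵀ).trace + (F * Fᵀ).trace := by rw [h1]; linarith
      _ = 2 * (F * Fᵀ).trace := by ring
  -- bound on |det - 1|
  have hdet1 : K * |F.det - 1| ≤ K + 2 * (K / (2 * F.det) * (F.det - 1) ^ 2) :=
    neoH_scalar K F.det hK hdet
  -- assemble
  have hTnorm : ‖T F θ‖ ≤ K * |F.det - 1| * sd
      + (2 * G / D) * (2 * (F * Fᵀ).trace) := by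
    rw [hT]
    calc ‖(K * (F.det - 1)) • (1 : Matrix (Fin d) (Fin d) ℝ)
        + (2 * G / D) • (F * Fᵀ - ((F * Fᵀ).trace / d) • (1 : Matrix (Fin d) (Fin d) ℝ))‖
        ≤ ‖(K * (F.det - 1)) • (1 : Matrix (Fin d) (Fin d) ℝ)‖
          + ‖(2 * G / D) • (F * Fᵀ - ((F * Fᵀ).trace / d) • (1 : Matrix (Fin d) (Fin d) ℝ))‖ :=
          norm_add_le _ _
      _ ≤ K * |F.det - 1| * sd + (2 * G / D) * (2 * (F * Fᵀ).trace) := by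
          rw [norm_smul, norm_smul, neoH_norm_one, Real.norm_eq_abs, Real.norm_eq_abs,
            abs_mul, abs_of_nonneg hK.le, abs_of_nonneg (by positivity : (0:ℝ) ≤ 2 * G / D)]
          gcongr
  have hsecond : (2 * G / D) * (2 * (F * Fᵀ).trace) = 4 * (G * (F * Fᵀ).trace / D) := by
    rw [div_mul_eq_mul_div, mul_div_assoc]; ring
  calc ‖T F θ‖ ≤ K * |F.det - 1| * sd + (2 * G / D) * (2 * (F * Fᵀ).trace) := hTnorm
    _ ≤ (K + 2 * (K / (2 * F.det) * (F.det - 1) ^ 2)) * sd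
        + 4 * (G * (F * Fᵀ).trace / D) := by
        rw [hsecond]
        have := mul_le_mul_of_nonneg_right hdet1 (by linarith : (0:ℝ) ≤ sd)
        linarith
    _ ≤ ((K + 2) * sd + 4) * (1 + E F θ) := by
        have hA : K / (2 * F.det) * (F.det - 1) ^ 2 ≤ E F θ := by rw [hEval]; linarith
        have hB : G * (F * Fᵀ).trace / D ≤ E F θ := by rw [hEval]; linarith
        exact neoH_final K sd _ _ _ hK hsd1 hA hB hE0 hE1
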